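/- arXiv:1104.0961 — 4 statements merged into one kernel-verified Lean document; each statement's English description precedes it below -/
import Mathlib

section
/- (Crossout Board Lemma, Alice's axis) Let D be a dinner with totally ordered preferences and D' ⊆ D a subdinner. Let m_1,...,m_n be the crossout sequence of D and m'_1,...,m'_k the crossout sequence of D' (k = |D'|). Then for every odd index i ≤ k, the first coordinate of m'_i is at least the first coordinate of m_i. -/
open Finset

/-- One step of the crossout process: at Alice's steps remove the remaining morsel of
minimal first coordinate, at Bob's steps the one of minimal second coordinate. -/
noncomputable def coAux (turnA : Bool) (D : Finset (ℝ × ℝ)) : List (ℝ × ℝ) :=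
  if h : D.Nonempty then
    (if turnA then (Finset.exists_min_image D Prod.fst h).choose
      else (Finset.exists_min_image D Prod.snd h).choose) ::
      coAux (!turnA)
        (D.erase (if turnA then (Finset.exists_min_image D Prod.fst h).choose
          else (Finset.exists_min_image D Prod.snd h).choose))
  else []
termination_by D.card
decreasing_by
  apply Finset.card_erase_lt_of_mem
  split
  · exact (Finset.exists_min_image D Prod.fst h).choose_spec.1
  · exact (Finset.exists_min_image D Prod.snd h).choose_spec.1

/-- The crossout sequence of a dinner, as a list `[m₁, m₂, …, mₙ]`. -/
noncomputable def crossoutList (D : Finset (ℝ × ℝ)) : List (ℝ × ℝ) := coAux true D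

/-- `crossout D i` is the `i`-th morsel `mᵢ` (1-indexed) of the crossout sequence of `D`. -/
noncomputable def crossout (D : Finset (ℝ × ℝ)) (i : ℕ) : ℝ × ℝ :=
  (crossoutList D).getD (i - 1) (0, 0)

/-- Totally ordered preferences: distinct morsels have distinct first coordinates and
distinct second coordinates. -/
def TotallyOrderedPrefs (D : Finset (ℝ × ℝ)) : Prop :=
  (∀ p ∈ D, ∀ q ∈ D, p.1 = q.1 → p = q) ∧ (∀ p ∈ D, ∀ q ∈ D, p.2 = q.2 → p = q)

/-- Alice's crossout score: sum of first coordinates of the even-indexed crossout morsels. -/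
noncomputable def chiA (D : Finset (ℝ × ℝ)) : ℝ :=
  ∑ i ∈ Finset.Icc 1 D.card, if Even i then (crossout D i).1 else 0

/-- Bob's crossout score: sum of second coordinates of the odd-indexed crossout morsels. -/
noncomputable def chiB (D : Finset (ℝ × ℝ)) : ℝ :=
  ∑ i ∈ Finset.Icc 1 D.card, if Odd i then (crossout D i).2 else 0
/-- The coordinate relevant to turn `t`. -/
noncomputable def pc (t : Bool) (p : ℝ × ℝ) : ℝ := if t then p.1 else p.2

noncomputable def minE (t : Bool) (D : Finset (ℝ × ℝ)) (h : D.Nonempty) : ℝ × ℝ :=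
  if t then (Finset.exists_min_image D Prod.fst h).choose
  else (Finset.exists_min_image D Prod.snd h).choose

lemma minE_mem (t : Bool) (D : Finset (ℝ × ℝ)) (h : D.Nonempty) : minE t D h ∈ D := by
  unfold minE; split
  · exact (Finset.exists_min_image D Prod.fst h).choose_spec.1
  · exact (Finset.exists_min_image D Prod.snd h).choose_spec.1

lemma minE_min (t : Bool) (D : Finset (ℝ × ℝ)) (h : D.Nonempty) {x} (hx : x ∈ D) :
    pc t (minE t D h) ≤ pc t x := by
  unfold minE pc
  cases t
  · simpa using (Finset.exists_min_image D Prod.snd h).choose_spec.2 x hx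
  · simpa using (Finset.exists_min_image D Prod.fst h).choose_spec.2 x hx

lemma coAux_cons (t : Bool) (D : Finset (ℝ × ℝ)) (h : D.Nonempty) :
    coAux t D = minE t D h :: coAux (!t) (D.erase (minE t D h)) := by
  rw [coAux, dif_pos h]; rfl

lemma top_subset {D S : Finset (ℝ × ℝ)} (hsub : S ⊆ D) (hD : TotallyOrderedPrefs D) :
    TotallyOrderedPrefs S :=
  ⟨fun p hp q hq => hD.1 p (hsub hp) q (hsub hq), fun p hp q hq => hD.2 p (hsub hp) q (hsub hq)⟩

lemma pc_eq_imp {D : Finset (ℝ × ℝ)} (hD : TotallyOrderedPrefs D) (t : Bool)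
    {p q} (hp : p ∈ D) (hq : q ∈ D) (h : pc t p = pc t q) : p = q := by
  cases t
  · exact hD.2 p hp q hq (by simpa [pc] using h)
  · exact hD.1 p hp q hq (by simpa [pc] using h)

lemma key : ∀ (j : ℕ) (t : Bool) (D D' : Finset (ℝ × ℝ)), D' ⊆ D → TotallyOrderedPrefs D →
    j < D'.card →
    pc (if Even j then t else !t) ((coAux t D).getD j (0,0)) ≤
      pc (if Even j then t else !t) ((coAux t D').getD j (0,0)) := by
  intro j
  induction j with
  | zero =>
    intro t D D' hsub hD hj
    have hD' : D'.Nonempty := Finset.card_pos.mp hj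
    have hDn : D.Nonempty := hD'.mono hsub
    rw [coAux_cons t D hDn, coAux_cons t D' hD']
    simp only [List.getD_cons_zero, if_pos Even.zero]
    exact minE_min t D hDn (hsub (minE_mem t D' hD'))
  | succ j ih =>
    intro t D D' hsub hD hj
    have hD' : D'.Nonempty := Finset.card_pos.mp (by omega)
    have hDn : D.Nonempty := hD'.mono hsub
    set a := minE t D hDn with ha
    set a' := minE t D' hD' with ha'
    have ha'D : a' ∈ D := hsub (minE_mem t D' hD')
    have hsub' : D'.erase a' ⊆ D.erase a := by
      intro x hx
      rcases Finset.mem_erase.mp hx with ⟨hxne, hxD'⟩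
      refine Finset.mem_erase.mpr ⟨?_, hsub hxD'⟩
      rintro rfl
      have h1 : pc t a ≤ pc t a' := minE_min t D hDn ha'D
      have h2 : pc t a' ≤ pc t a := minE_min t D' hD' hxD'
      exact hxne (pc_eq_imp hD t (hsub hxD') ha'D (le_antisymm h1 h2))
    have hcard : j < (D'.erase a').card := by
      rw [Finset.card_erase_of_mem (minE_mem t D' hD')]; omega
    have hTOP := top_subset (Finset.erase_subset a D) hD
    have H := ih (!t) (D.erase a) (D'.erase a') hsub' hTOP hcard
    rw [coAux_cons t D hDn, coAux_cons t D' hD']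
    simp only [List.getD_cons_succ]
    have hturn : (if Even (j+1) then t else !t) = (if Even j then !t else !(!t)) := by
      by_cases h : Even j <;> simp [h, Nat.even_add_one]
    rw [hturn]
    exact H

/-- Crossout Board Lemma, Alice's axis: on a subdinner, each odd label sits at least as
far from the origin along Alice's axis. -/
theorem crossout_board_lemma_alice (D D' : Finset (ℝ × ℝ)) (hsub : D' ⊆ D)
    (hD : TotallyOrderedPrefs D) :
    ∀ i : ℕ, Odd i → i ≤ D'.card → (crossout D i).1 ≤ (crossout D' i).1 := by
  intro i hodd hle
  obtain ⟨m, rfl⟩ := hodd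
  have hj : 2 * m < D'.card := by omega
  have H := key (2 * m) true D D' hsub hD hj
  have h2 : 2 * m + 1 - 1 = 2 * m := by omega
  unfold crossout crossoutList
  rw [h2]
  simpa [pc, even_two_mul] using H
end

section
/- (Main Lemma, first player Alice) Let D be a dinner with an even number n of morsels (so Alice moves first and Bob moves last), and let m be any morsel of D. Then u_A(m) + χ_A(D − m) ≤ χ_A(D), where u_A(m) is the first coordinate of m. -/
open Finset

/- auxiliary development -/

noncomputable def pSum : Bool → List (ℝ × ℝ) → ℝ
  | _, [] => 0
  | b, a :: l => (if b then a.1 else 0) + pSum (!b) l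

lemma coAux_empty (t : Bool) : coAux t ∅ = [] := by
  rw [coAux]; simp

lemma coAux_length (D : Finset (ℝ × ℝ)) : ∀ t, (coAux t D).length = D.card := by
  induction D using Finset.strongInduction with
  | _ D ih =>
    intro t
    by_cases h : D.Nonempty
    · rw [coAux, dif_pos h]
      set a := (if t then (Finset.exists_min_image D Prod.fst h).choose
        else (Finset.exists_min_image D Prod.snd h).choose) with ha
      have hm : a ∈ D := by
        rw [ha]
        split
        · exact (Finset.exists_min_image D Prod.fst h).choose_spec.1
        · exact (Finset.exists_min_image D Prod.snd h).choose_spec.1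
      rw [List.length_cons, ih _ (Finset.erase_ssubset hm), Finset.card_erase_of_mem hm]
      have := Finset.card_pos.mpr h
      omega
    · rw [coAux, dif_neg h]
      simp [Finset.not_nonempty_iff_eq_empty.mp h]

lemma top_mono {D E : Finset (ℝ × ℝ)} (h : E ⊆ D) (hD : TotallyOrderedPrefs D) :
    TotallyOrderedPrefs E :=
  ⟨fun p hp q hq => hD.1 p (h hp) q (h hq), fun p hp q hq => hD.2 p (h hp) q (h hq)⟩

lemma coAux_true_eq {D : Finset (ℝ × ℝ)} (hD : TotallyOrderedPrefs D) {a : ℝ × ℝ}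
    (ha : a ∈ D) (hmin : ∀ p ∈ D, a.1 ≤ p.1) :
    coAux true D = a :: coAux false (D.erase a) := by
  have h : D.Nonempty := ⟨a, ha⟩
  rw [coAux, dif_pos h]
  have hs := (Finset.exists_min_image D Prod.fst h).choose_spec
  have hc : (Finset.exists_min_image D Prod.fst h).choose = a :=
    hD.1 _ hs.1 _ ha (le_antisymm (hs.2 a ha) (hmin _ hs.1))
  simp only [if_true, Bool.not_true]
  rw [hc]

lemma coAux_false_eq {D : Finset (ℝ × ℝ)} (hD : TotallyOrderedPrefs D) {a : ℝ × ℝ}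
    (ha : a ∈ D) (hmin : ∀ p ∈ D, a.2 ≤ p.2) :
    coAux false D = a :: coAux true (D.erase a) := by
  have h : D.Nonempty := ⟨a, ha⟩
  rw [coAux, dif_pos h]
  have hs := (Finset.exists_min_image D Prod.snd h).choose_spec
  have hc : (Finset.exists_min_image D Prod.snd h).choose = a :=
    hD.2 _ hs.1 _ ha (le_antisymm (hs.2 a ha) (hmin _ hs.1))
  simp only [Bool.false_eq_true, reduceIte, Bool.not_false]
  rw [hc]

noncomputable def chi (D : Finset (ℝ × ℝ)) : ℝ := pSum false (coAux true D)
noncomputable def psi (D : Finset (ℝ × ℝ)) : ℝ := pSum true (coAux false D)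

lemma chi_empty : chi ∅ = 0 := by simp [chi, coAux_empty, pSum]
lemma psi_empty : psi ∅ = 0 := by simp [psi, coAux_empty, pSum]

lemma chi_eq_psi {D : Finset (ℝ × ℝ)} (hD : TotallyOrderedPrefs D) {a : ℝ × ℝ}
    (ha : a ∈ D) (hmin : ∀ p ∈ D, a.1 ≤ p.1) : chi D = psi (D.erase a) := by
  unfold chi psi
  rw [coAux_true_eq hD ha hmin]
  simp [pSum]

lemma psi_eq_chi {D : Finset (ℝ × ℝ)} (hD : TotallyOrderedPrefs D) {a : ℝ × ℝ}
    (ha : a ∈ D) (hmin : ∀ p ∈ D, a.2 ≤ p.2) : psi D = a.1 + chi (D.erase a) := by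
  unfold chi psi
  rw [coAux_false_eq hD ha hmin]
  simp [pSum]

lemma erase_min_fst {D : Finset (ℝ × ℝ)} {a m : ℝ × ℝ} (hmin : ∀ p ∈ D, a.1 ≤ p.1) :
    ∀ p ∈ D.erase m, a.1 ≤ p.1 := fun p hp => hmin p (Finset.mem_of_mem_erase hp)

lemma erase_min_snd {D : Finset (ℝ × ℝ)} {a m : ℝ × ℝ} (hmin : ∀ p ∈ D, a.2 ≤ p.2) :
    ∀ p ∈ D.erase m, a.2 ≤ p.2 := fun p hp => hmin p (Finset.mem_of_mem_erase hp)

lemma master (n : ℕ) : ∀ D : Finset (ℝ × ℝ), D.card ≤ n → TotallyOrderedPrefs D →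
    ((Even D.card → ∀ m ∈ D, m.1 + chi (D.erase m) ≤ chi D) ∧
     (Odd D.card → ∀ x : ℝ, (∀ p ∈ D, x ≤ p.1) → x + chi D ≤ psi D) ∧
     (Odd D.card → ∀ m ∈ D, m.1 + psi (D.erase m) ≤ psi D) ∧
     (Even D.card → psi D ≤ chi D)) := by
  induction n with
  | zero =>
    intro D hcard _
    have hD0 : D = ∅ := Finset.card_eq_zero.mp (Nat.le_zero.mp hcard)
    subst hD0
    refine ⟨fun _ m hm => absurd hm (by simp), fun hodd => absurd hodd (by simp), 
      fun hodd => absurd hodd (by simp), fun _ => le_of_eq (by rw [chi_empty, psi_empty])⟩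
  | succ n ih =>
    intro D hcard hD
    have hsub : ∀ m : ℝ × ℝ, TotallyOrderedPrefs (D.erase m) :=
      fun m => top_mono (Finset.erase_subset _ _) hD
    have hsub2 : ∀ m m' : ℝ × ℝ, TotallyOrderedPrefs ((D.erase m).erase m') :=
      fun m m' => top_mono (Finset.erase_subset _ _) (hsub m)
    refine ⟨?_, ?_, ?_, ?_⟩
    · -- G : Even card
      intro heven m hm
      have hne : D.Nonempty := ⟨m, hm⟩
      have hpos := Finset.card_pos.mpr hne
      obtain ⟨f, hf, hfmin⟩ := Finset.exists_min_image D Prod.fst hne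
      have hchiD : chi D = psi (D.erase f) := chi_eq_psi hD hf hfmin
      have hcard' : (D.erase f).card ≤ n := by
        rw [Finset.card_erase_of_mem hf]; omega
      have hodd : Odd (D.erase f).card := by
        rw [Finset.card_erase_of_mem hf, Nat.odd_iff]
        rw [Nat.even_iff] at heven; omega
      by_cases hmf : m = f
      · subst hmf
        rw [hchiD]
        exact (ih _ hcard' (hsub m)).2.1 hodd m.1 (erase_min_fst hfmin)
      · have hfm : f ∈ D.erase m := Finset.mem_erase.mpr ⟨fun h => hmf h.symm, hf⟩
        have hchiDm : chi (D.erase m) = psi ((D.erase m).erase f) :=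
          chi_eq_psi (hsub m) hfm (erase_min_fst hfmin)
        rw [hchiD, hchiDm, Finset.erase_right_comm]
        exact (ih _ hcard' (hsub f)).2.2.1 hodd m
          (Finset.mem_erase.mpr ⟨hmf, hm⟩)
    · -- H : Odd card
      intro hodd x hx
      have hne : D.Nonempty := Finset.card_pos.mp (by rw [Nat.odd_iff] at hodd; omega)
      have hpos := Finset.card_pos.mpr hne
      obtain ⟨f, hf, hfmin⟩ := Finset.exists_min_image D Prod.fst hne
      obtain ⟨g, hg, hgmin⟩ := Finset.exists_min_image D Prod.snd hne
      have hchiD : chi D = psi (D.erase f) := chi_eq_psi hD hf hfmin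
      have hpsiD : psi D = g.1 + chi (D.erase g) := psi_eq_chi hD hg hgmin
      have hxf : x ≤ f.1 := hx f hf
      by_cases hfg : f = g
      · subst hfg
        have hcard' : (D.erase f).card ≤ n := by rw [Finset.card_erase_of_mem hf]; omega
        have heven' : Even (D.erase f).card := by
          rw [Finset.card_erase_of_mem hf, Nat.even_iff]
          rw [Nat.odd_iff] at hodd; omega
        have hJ := (ih _ hcard' (hsub f)).2.2.2 heven'
        rw [hchiD, hpsiD]
        linarith
      · have hgf : g ∈ D.erase f := Finset.mem_erase.mpr ⟨fun h => hfg h.symm, hg⟩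
        have hfg' : f ∈ D.erase g := Finset.mem_erase.mpr ⟨hfg, hf⟩
        have h1 : psi (D.erase f) = g.1 + chi ((D.erase f).erase g) :=
          psi_eq_chi (hsub f) hgf (erase_min_snd hgmin)
        have hcard' : (D.erase g).card ≤ n := by rw [Finset.card_erase_of_mem hg]; omega
        have heven' : Even (D.erase g).card := by
          rw [Finset.card_erase_of_mem hg, Nat.even_iff]
          rw [Nat.odd_iff] at hodd; omega
        have h2 := (ih _ hcard' (hsub g)).1 heven' f hfg'
        rw [hchiD, hpsiD, h1, Finset.erase_right_comm]
        linarith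
    · -- K : Odd card
      intro hodd m hm
      have hne : D.Nonempty := ⟨m, hm⟩
      have hpos := Finset.card_pos.mpr hne
      obtain ⟨g, hg, hgmin⟩ := Finset.exists_min_image D Prod.snd hne
      have hpsiD : psi D = g.1 + chi (D.erase g) := psi_eq_chi hD hg hgmin
      have hcard' : (D.erase g).card ≤ n := by rw [Finset.card_erase_of_mem hg]; omega
      have heven' : Even (D.erase g).card := by
        rw [Finset.card_erase_of_mem hg, Nat.even_iff]
        rw [Nat.odd_iff] at hodd; omega
      by_cases hmg : m = g
      · subst hmg
        have hJ := (ih _ hcard' (hsub m)).2.2.2 heven'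
        have hP : psi (D.erase m) ≤ chi (D.erase m) := hJ
        rw [hpsiD]
        linarith
      · have hgm : g ∈ D.erase m := Finset.mem_erase.mpr ⟨fun h => hmg h.symm, hg⟩
        have h1 : psi (D.erase m) = g.1 + chi ((D.erase m).erase g) :=
          psi_eq_chi (hsub m) hgm (erase_min_snd hgmin)
        have h2 := (ih _ hcard' (hsub g)).1 heven' m (Finset.mem_erase.mpr ⟨hmg, hm⟩)
        rw [hpsiD, h1, Finset.erase_right_comm]
        linarith
    · -- J : Even card
      intro heven
      rcases D.eq_empty_or_nonempty with rfl | hne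
      · rw [chi_empty, psi_empty]
      · have hpos := Finset.card_pos.mpr hne
        obtain ⟨f, hf, hfmin⟩ := Finset.exists_min_image D Prod.fst hne
        obtain ⟨g, hg, hgmin⟩ := Finset.exists_min_image D Prod.snd hne
        have hchiD : chi D = psi (D.erase f) := chi_eq_psi hD hf hfmin
        have hpsiD : psi D = g.1 + chi (D.erase g) := psi_eq_chi hD hg hgmin
        by_cases hfg : f = g
        · subst hfg
          have hcard' : (D.erase f).card ≤ n := by rw [Finset.card_erase_of_mem hf]; omega
          have hodd' : Odd (D.erase f).card := by
            rw [Finset.card_erase_of_mem hf, Nat.odd_iff]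
            rw [Nat.even_iff] at heven; omega
          have hH := (ih _ hcard' (hsub f)).2.1 hodd' f.1 (erase_min_fst hfmin)
          rw [hchiD, hpsiD]
          linarith
        · have hgf : g ∈ D.erase f := Finset.mem_erase.mpr ⟨fun h => hfg h.symm, hg⟩
          have hfg' : f ∈ D.erase g := Finset.mem_erase.mpr ⟨hfg, hf⟩
          have h1 : chi (D.erase g) = psi ((D.erase g).erase f) :=
            chi_eq_psi (hsub g) hfg' (erase_min_fst hfmin)
          have h2 : psi (D.erase f) = g.1 + chi ((D.erase f).erase g) :=
            psi_eq_chi (hsub f) hgf (erase_min_snd hgmin)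
          have hcard2 : ((D.erase g).erase f).card ≤ n := by
            rw [Finset.card_erase_of_mem hfg', Finset.card_erase_of_mem hg]; omega
          have heven2 : Even ((D.erase g).erase f).card := by
            rw [Finset.card_erase_of_mem hfg', Finset.card_erase_of_mem hg, Nat.even_iff]
            rw [Nat.even_iff] at heven
            omega
          have hJ := (ih _ hcard2 (hsub2 g f)).2.2.2 heven2
          rw [Finset.erase_right_comm] at hJ
          rw [hchiD, hpsiD, h1, h2, Finset.erase_right_comm]
          linarith

lemma pSum_eq (l : List (ℝ × ℝ)) :
    (∑ i ∈ Finset.range l.length, if Even (i+1) then (l.getD i (0, 0)).1 else 0)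
      = pSum false l ∧
    (∑ i ∈ Finset.range l.length, if ¬ Even (i+1) then (l.getD i (0, 0)).1 else 0)
      = pSum true l := by
  induction l with
  | nil => simp [pSum]
  | cons a l ih =>
    rw [List.length_cons]
    constructor
    · rw [Finset.sum_range_succ']
      have h0 : (if Even (0+1) then ((a :: l).getD 0 (0, 0)).1 else 0) = 0 := by
        norm_num
      rw [h0, add_zero]
      have he : ∀ i ∈ Finset.range l.length,
          (if Even (i+1+1) then ((a :: l).getD (i+1) (0, 0)).1 else 0)
            = (if ¬ Even (i+1) then (l.getD i (0, 0)).1 else 0) := by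
        intro i _
        rw [List.getD_cons_succ]
        simp [Nat.even_add_one]
      rw [Finset.sum_congr rfl he, ih.2]
      simp [pSum]
    · rw [Finset.sum_range_succ']
      have h0 : (if ¬ Even (0+1) then ((a :: l).getD 0 (0, 0)).1 else 0) = a.1 := by
        norm_num
      rw [h0]
      have he : ∀ i ∈ Finset.range l.length,
          (if ¬ Even (i+1+1) then ((a :: l).getD (i+1) (0, 0)).1 else 0)
            = (if Even (i+1) then (l.getD i (0, 0)).1 else 0) := by
        intro i _
        rw [List.getD_cons_succ]
        simp [Nat.even_add_one]
      rw [Finset.sum_congr rfl he, ih.1]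
      simp [pSum, add_comm]

lemma chiA_eq_chi (D : Finset (ℝ × ℝ)) : chiA D = chi D := by
  unfold chiA
  have hlen : (coAux true D).length = D.card := coAux_length D true
  rw [show Finset.Icc 1 D.card = Finset.Ico 1 (D.card + 1) by rw [Finset.Ico_add_one_right_eq_Icc],
    Finset.sum_Ico_eq_sum_range]
  have : ∀ i ∈ Finset.range (D.card + 1 - 1), (if Even (1 + i) then (crossout D (1 + i)).1 else 0)
      = (if Even (i + 1) then ((coAux true D).getD i (0, 0)).1 else 0) := by
    intro i _
    rw [add_comm 1 i]
    rfl
  rw [Finset.sum_congr rfl this]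
  have := (pSum_eq (coAux true D)).1
  rw [hlen] at this
  simpa [chi] using this


/-- Main Lemma, first player Alice: eating any first morsel m gives Alice at most her
crossout score. -/
theorem main_lemma_alice (D : Finset (ℝ × ℝ)) (hD : TotallyOrderedPrefs D)
    (hn : Even D.card) (m : ℝ × ℝ) (hm : m ∈ D) :
    m.1 + chiA (D.erase m) ≤ chiA D := by
  rw [chiA_eq_chi, chiA_eq_chi]
  exact (master D.card D le_rfl hD).1 hn m hm
end

section
/- If both players play the crossout strategy, then the first player to move eats her/his favourite morsel at some point during the dinner. Precisely: if |D| = n is even, then Alice's favourite morsel (maximal first coordinate) is one of the even-indexed crossout morsels m_2, m_4, ...; if n is odd, then Bob's favourite morsel (maximal second coordinate) is one of the odd-indexed crossout morsels m_1, m_3, .... -/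
open Finset

lemma TOP_erase {D : Finset (ℝ × ℝ)} (h : TotallyOrderedPrefs D) (x : ℝ × ℝ) :
    TotallyOrderedPrefs (D.erase x) :=
  ⟨fun p hp q hq => h.1 p (Finset.mem_of_mem_erase hp) q (Finset.mem_of_mem_erase hq),
   fun p hp q hq => h.2 p (Finset.mem_of_mem_erase hp) q (Finset.mem_of_mem_erase hq)⟩

lemma keyA : ∀ (n : ℕ) (b : Bool) (D : Finset (ℝ × ℝ)), D.card = n →
    TotallyOrderedPrefs D → ∀ m ∈ D, (∀ p ∈ D, p.1 ≤ m.1) →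
    ∃ k, k < D.card ∧ (coAux b D).getD k (0,0) = m ∧
      ((b = true ∧ Even k ∨ b = false ∧ ¬ Even k) → k + 1 = D.card) := by
  intro n
  induction n using Nat.strong_induction_on with
  | _ n ih =>
    intro b D hcard hD m hm hmax
    have hne : D.Nonempty := ⟨m, hm⟩
    rw [coAux, dif_pos hne]
    set h0 : ℝ × ℝ := (if b then (Finset.exists_min_image D Prod.fst hne).choose
      else (Finset.exists_min_image D Prod.snd hne).choose) with hh0
    have h0mem : h0 ∈ D := by
      rw [hh0]; split
      · exact (Finset.exists_min_image D Prod.fst hne).choose_spec.1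
      · exact (Finset.exists_min_image D Prod.snd hne).choose_spec.1
    by_cases hcase : h0 = m
    · refine ⟨0, Finset.card_pos.mpr hne, by simp [hcase], ?_⟩
      rintro (⟨hb, _⟩ | ⟨hb, hk⟩)
      · -- b = true : h0 is min fst, m is max fst, so D = {m}
        have hmin := (Finset.exists_min_image D Prod.fst hne).choose_spec.2
        have : D = {m} := by
          apply Finset.eq_singleton_iff_unique_mem.mpr
          refine ⟨hm, fun p hp => ?_⟩
          apply hD.1 p hp m hm
          have h1 := hmin p hp
          rw [hh0, if_pos hb] at hcase
          rw [hcase] at h1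
          exact le_antisymm (hmax p hp) h1
        rw [this, Finset.card_singleton]
      · exact absurd (Even.zero) hk
    · -- h0 ≠ m, recurse
      have hm' : m ∈ D.erase h0 := Finset.mem_erase.mpr ⟨fun h => hcase h.symm, hm⟩
      have hcard' : (D.erase h0).card = n - 1 := by
        rw [Finset.card_erase_of_mem h0mem, hcard]
      have hn1 : n - 1 < n := by
        have : 0 < n := hcard ▸ Finset.card_pos.mpr hne
        omega
      obtain ⟨k, hk1, hk2, hk3⟩ := ih (n-1) hn1 (!b) (D.erase h0) hcard'
        (TOP_erase hD h0) m hm'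
        (fun p hp => hmax p (Finset.mem_of_mem_erase hp))
      refine ⟨k + 1, ?_, ?_, ?_⟩
      · rw [hcard] at *; omega
      · simpa using hk2
      · rintro (⟨hb, hk⟩ | ⟨hb, hk⟩)
        · have : (!b) = false ∧ ¬ Even k := by
            constructor
            · simp [hb]
            · intro hke; exact (Nat.even_add_one.mp hk) hke
          have := hk3 (Or.inr this)
          rw [hcard] at *; omega
        · have : (!b) = true ∧ Even k := by
            constructor
            · simp [hb]
            · rcases Nat.even_or_odd k with h | h
              · exact h
              · exact absurd (Nat.even_add_one.mpr (Nat.not_even_iff_odd.mpr h)) hk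
          have := hk3 (Or.inl this)
          rw [hcard] at *; omega

lemma keyB : ∀ (n : ℕ) (b : Bool) (D : Finset (ℝ × ℝ)), D.card = n →
    TotallyOrderedPrefs D → ∀ m ∈ D, (∀ p ∈ D, p.2 ≤ m.2) →
    ∃ k, k < D.card ∧ (coAux b D).getD k (0,0) = m ∧
      ((b = false ∧ Even k ∨ b = true ∧ ¬ Even k) → k + 1 = D.card) := by
  intro n
  induction n using Nat.strong_induction_on with
  | _ n ih =>
    intro b D hcard hD m hm hmax
    have hne : D.Nonempty := ⟨m, hm⟩
    rw [coAux, dif_pos hne]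
    set h0 : ℝ × ℝ := (if b then (Finset.exists_min_image D Prod.fst hne).choose
      else (Finset.exists_min_image D Prod.snd hne).choose) with hh0
    have h0mem : h0 ∈ D := by
      rw [hh0]; split
      · exact (Finset.exists_min_image D Prod.fst hne).choose_spec.1
      · exact (Finset.exists_min_image D Prod.snd hne).choose_spec.1
    by_cases hcase : h0 = m
    · refine ⟨0, Finset.card_pos.mpr hne, by simp [hcase], ?_⟩
      rintro (⟨hb, _⟩ | ⟨hb, hk⟩)
      · have hmin := (Finset.exists_min_image D Prod.snd hne).choose_spec.2
        have : D = {m} := by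
          apply Finset.eq_singleton_iff_unique_mem.mpr
          refine ⟨hm, fun p hp => ?_⟩
          apply hD.2 p hp m hm
          have h1 := hmin p hp
          rw [hh0, if_neg (by simp [hb])] at hcase
          rw [hcase] at h1
          exact le_antisymm (hmax p hp) h1
        rw [this, Finset.card_singleton]
      · exact absurd (Even.zero) hk
    · have hm' : m ∈ D.erase h0 := Finset.mem_erase.mpr ⟨fun h => hcase h.symm, hm⟩
      have hcard' : (D.erase h0).card = n - 1 := by
        rw [Finset.card_erase_of_mem h0mem, hcard]
      have hn1 : n - 1 < n := by
        have : 0 < n := hcard ▸ Finset.card_pos.mpr hne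
        omega
      obtain ⟨k, hk1, hk2, hk3⟩ := ih (n-1) hn1 (!b) (D.erase h0) hcard'
        (TOP_erase hD h0) m hm'
        (fun p hp => hmax p (Finset.mem_of_mem_erase hp))
      refine ⟨k + 1, ?_, ?_, ?_⟩
      · rw [hcard] at *; omega
      · simpa using hk2
      · rintro (⟨hb, hk⟩ | ⟨hb, hk⟩)
        · have : (!b) = true ∧ ¬ Even k := by
            constructor
            · simp [hb]
            · intro hke; exact (Nat.even_add_one.mp hk) hke
          have := hk3 (Or.inr this)
          rw [hcard] at *; omega
        · have : (!b) = false ∧ Even k := by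
            constructor
            · simp [hb]
            · rcases Nat.even_or_odd k with h | h
              · exact h
              · exact absurd (Nat.even_add_one.mpr (Nat.not_even_iff_odd.mpr h)) hk
          have := hk3 (Or.inl this)
          rw [hcard] at *; omega

/-- Under mutual crossout play the first player eats her/his favourite morsel:
if |D| is even, Alice's favourite is an even-indexed crossout morsel; if |D| is odd,
Bob's favourite is an odd-indexed crossout morsel. -/
theorem first_player_eats_favourite (D : Finset (ℝ × ℝ)) (hD : TotallyOrderedPrefs D)
    (hne : D.Nonempty) :
    (Even D.card → ∃ i : ℕ, Even i ∧ 1 ≤ i ∧ i ≤ D.card ∧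
      ∀ m ∈ D, m.1 ≤ (crossout D i).1) ∧
    (Odd D.card → ∃ i : ℕ, Odd i ∧ 1 ≤ i ∧ i ≤ D.card ∧
      ∀ m ∈ D, m.2 ≤ (crossout D i).2) := by
  constructor
  · intro heven
    obtain ⟨m, hm, hmax⟩ := Finset.exists_max_image D Prod.fst hne
    obtain ⟨k, hk1, hk2, hk3⟩ := keyA D.card true D rfl hD m hm hmax
    have hknot : ¬ Even k := by
      intro hke
      have := hk3 (Or.inl ⟨rfl, hke⟩)
      rw [← this] at heven
      exact (Nat.even_add_one.mp heven) hke
    refine ⟨k + 1, Nat.even_add_one.mpr hknot, by omega, by omega, ?_⟩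
    intro p hp
    have : crossout D (k+1) = m := by
      simp only [crossout, crossoutList, Nat.add_sub_cancel, hk2]
    rw [this]; exact hmax p hp
  · intro hodd
    obtain ⟨m, hm, hmax⟩ := Finset.exists_max_image D Prod.snd hne
    obtain ⟨k, hk1, hk2, hk3⟩ := keyB D.card true D rfl hD m hm hmax
    have hke : Even k := by
      by_contra hknot
      have := hk3 (Or.inr ⟨rfl, hknot⟩)
      rw [← this] at hodd
      exact (Nat.not_odd_iff_even.mpr (Nat.even_add_one.mpr hknot)) hodd
    refine ⟨k + 1, Even.add_one hke, by omega, by omega, ?_⟩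
    intro p hp
    have : crossout D (k+1) = m := by
      simp only [crossout, crossoutList, Nat.add_sub_cancel, hk2]
    rw [this]; exact hmax p hp
end

section
/- The crossout outcome is approximately envy-free: if both players play the crossout strategy on a dinner D of even size n (Alice first, Bob last), then Alice's score is at least the sum of Alice-utilities of the morsels Bob eats, i.e., χ_A(D) ≥ sum of first coordinates of the odd-indexed crossout morsels. -/
open Finset

lemma crossoutList_two_step (D : Finset (ℝ × ℝ)) (h2 : 2 ≤ D.card) :
    ∃ a b, a ∈ D ∧ b ∈ D.erase a ∧ (∀ x ∈ D, a.1 ≤ x.1) ∧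
      crossoutList D = a :: b :: crossoutList ((D.erase a).erase b) := by
  have h : D.Nonempty := Finset.card_pos.mp (by omega)
  set a := (Finset.exists_min_image D Prod.fst h).choose with ha
  obtain ⟨haD, hamin⟩ := (Finset.exists_min_image D Prod.fst h).choose_spec
  have h' : (D.erase a).Nonempty := by
    rw [← Finset.card_pos, Finset.card_erase_of_mem haD]; omega
  set b := (Finset.exists_min_image (D.erase a) Prod.snd h').choose with hb
  obtain ⟨hbD, _⟩ := (Finset.exists_min_image (D.erase a) Prod.snd h').choose_spec
  refine ⟨a, b, haD, hbD, hamin, ?_⟩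
  rw [crossoutList, coAux, dif_pos h]
  simp only [if_true, Bool.not_true]
  rw [coAux, dif_pos h']
  simp only [if_neg (by simp : ¬ (false = true)), Bool.not_false]
  rfl

lemma crossout_key : ∀ n : ℕ, ∀ D : Finset (ℝ × ℝ), D.card = n → Even n →
    ∑ i ∈ Finset.Icc 1 n,
      (if Odd i then (crossout D i).1 else -(crossout D i).1) ≤ 0 := by
  intro n
  induction n using Nat.strong_induction_on with
  | _ n ih =>
    intro D hcard hn
    rcases Nat.eq_zero_or_pos n with h0 | hpos
    · subst h0; simp
    have h2 : 2 ≤ n := by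
      rcases hn with ⟨k, hk⟩; omega
    obtain ⟨m, hm⟩ : ∃ m, n = m + 2 := ⟨n - 2, by omega⟩
    subst hm
    obtain ⟨a, b, haD, hbD, hamin, hlist⟩ := crossoutList_two_step D (by omega)
    set D'' := (D.erase a).erase b with hD''
    have hcard'' : D''.card = m := by
      rw [hD'', Finset.card_erase_of_mem hbD, Finset.card_erase_of_mem haD, hcard]; omega
    have hc1 : crossout D 1 = a := by
      rw [crossout, hlist]; rfl
    have hc2 : crossout D 2 = b := by
      rw [crossout, hlist]; rfl
    have hcshift : ∀ i : ℕ, 1 ≤ i → crossout D (i + 2) = crossout D'' i := by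
      intro i hi
      rw [crossout, crossout, hlist]
      have : i + 2 - 1 = (i - 1) + 2 := by omega
      rw [this]
      rfl
    have hsplit : Finset.Icc 1 (m + 2) = Finset.Icc 1 2 ∪ Finset.Icc 3 (m + 2) := by
      ext i; simp only [Finset.mem_Icc, Finset.mem_union]; omega
    have hdisj : Disjoint (Finset.Icc 1 2) (Finset.Icc 3 (m + 2)) := by
      rw [Finset.disjoint_left]
      intro i hi hi'
      simp only [Finset.mem_Icc] at hi hi'; omega
    rw [hsplit, Finset.sum_union hdisj]
    have hmap : Finset.Icc 3 (m + 2) = (Finset.Icc 1 m).map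
        (addRightEmbedding 2) := by
      rw [Finset.map_add_right_Icc]
    have htail : ∑ i ∈ Finset.Icc 3 (m + 2),
        (if Odd i then (crossout D i).1 else -(crossout D i).1)
        = ∑ i ∈ Finset.Icc 1 m,
          (if Odd i then (crossout D'' i).1 else -(crossout D'' i).1) := by
      rw [hmap, Finset.sum_map]
      apply Finset.sum_congr rfl
      intro i hi
      simp only [Finset.mem_Icc] at hi
      have hodd : Odd (i + 2) ↔ Odd i := by
        rw [Nat.odd_iff, Nat.odd_iff]; omega
      simp only [addRightEmbedding, Function.Embedding.coeFn_mk]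
      rw [hcshift i hi.1]
      by_cases h : Odd i
      · rw [if_pos h]; exact if_pos (hodd.mpr h)
      · rw [if_neg h]; exact if_neg (fun hh => h (hodd.mp hh))
    rw [htail]
    have htail_le : ∑ i ∈ Finset.Icc 1 m,
        (if Odd i then (crossout D'' i).1 else -(crossout D'' i).1) ≤ 0 := by
      apply ih m (by omega) D'' hcard''
      rcases hn with ⟨k, hk⟩; exact ⟨k - 1, by omega⟩
    have hhead : ∑ i ∈ Finset.Icc 1 2,
        (if Odd i then (crossout D i).1 else -(crossout D i).1) ≤ 0 := by
      have : Finset.Icc 1 2 = {1, 2} := rfl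
      rw [this]
      rw [Finset.sum_insert (by norm_num), Finset.sum_singleton]
      simp only [hc1, hc2]
      rw [if_pos (by decide : Odd 1), if_neg (by decide : ¬ Odd 2)]
      have : a.1 ≤ b.1 := hamin b (Finset.mem_of_mem_erase hbD)
      linarith
    linarith

/-- Approximate envy-freeness: with |D| even, Alice's crossout score is at least the sum
of Alice-utilities of the morsels Bob eats (the odd-indexed crossout morsels). -/
theorem crossout_envy_free_first_player (D : Finset (ℝ × ℝ)) (hD : TotallyOrderedPrefs D)
    (hn : Even D.card) :
    (∑ i ∈ Finset.Icc 1 D.card, if Odd i then (crossout D i).1 else 0) ≤ chiA D := by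
  have key := crossout_key D.card D rfl hn
  rw [chiA, ← sub_nonpos, ← Finset.sum_sub_distrib]
  refine le_trans (le_of_eq ?_) key
  apply Finset.sum_congr rfl
  intro i hi
  by_cases h : Odd i
  · rw [if_pos h, if_pos h, if_neg (Nat.not_even_iff_odd.mpr h), sub_zero]
  · rw [if_neg h, if_neg h, if_pos (Nat.not_odd_iff_even.mp h), zero_sub]
end
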